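/- If u and v are reduced words in the generators of R that represent the same element of R, then u and v are equal as words; that is, the quotient map from the free monoid on the generators of R onto R is injective on the set of reduced words. -/

import Mathlib

open scoped Classical

namespace SgC

variable {M : Type*}

/-- Composition of partial maps (`g` after `f`). -/
def pcomp (g f : M → Option M) : M → Option M := fun s => (f s).bind g

/-- The canonical partial inverse of a partial map (the genuine inverse when the map
is injective on its domain, as is the case for all maps in the left inverse hull of a
left cancellative monoid). -/
noncomputable def pinv (f : M → Option M) : M → Option M :=
  fun t => if h : ∃ s, f s = some t then some h.choose else none

/-- Left translation `t ↦ s * t` as an everywhere-defined partial map. -/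
def ptransl [Mul M] (s : M) : M → Option M := fun t => some (s * t)

/-- The identity partial map. -/
def pid : M → Option M := fun s => some s

/-- The block `q⁻¹ ∘ p`: first multiply on the left by `p`, then remove `q` on the left. -/
noncomputable def pblock [Mul M] (p : M × M) : M → Option M :=
  pcomp (pinv (ptransl p.2)) (ptransl p.1)

/-- Membership in the left inverse hull `I_ℓ(M)`: `h` is of the form
`s₂ₙ⁻¹ s₂ₙ₋₁ ⋯ s₂⁻¹ s₁` for some `n ≥ 1` and `sᵢ ∈ M` (the list records the pairs
`(s₁,s₂), (s₃,s₄), …`, applied left to right). -/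
def InInvHull [Mul M] (h : M → Option M) : Prop :=
  ∃ l : List (M × M), l ≠ [] ∧
    h = l.foldl (fun acc p => pcomp (pblock p) acc) pid

/-- Membership in the inverse hull generated by translations by elements of `σ` only
(used for canonical copies of `I_ℓ(S)` inside partial maps of a larger monoid). -/
def InInvHullOn [Mul M] (σ : Set M) (h : M → Option M) : Prop :=
  ∃ l : List (M × M), l ≠ [] ∧ (∀ p ∈ l, p.1 ∈ σ ∧ p.2 ∈ σ) ∧
    h = l.foldl (fun acc p => pcomp (pblock p) acc) pid

/-- Domain of a partial map. -/
def pdom (h : M → Option M) : Set M := {s | h s ≠ none}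

/-- `h` fixes the set `Y` pointwise (in particular `Y ⊆ dom h`). -/
def PFixes (h : M → Option M) (Y : Set M) : Prop := ∀ s ∈ Y, h s = some s

/-- Preimage of a set under a partial map. -/
def ppre (h : M → Option M) (X : Set M) : Set M := {s | ∃ x ∈ X, h s = some x}

/-- Constructible right ideals: domains of elements of the left inverse hull. -/
def IsConstructible [Mul M] (X : Set M) : Prop := ∃ h, InInvHull h ∧ X = pdom h

/-- Membership in `J̄(S)`: sets of the form `X₀` or `X₀ ∖ (X₁ ∪ ⋯ ∪ Xₘ)` with all
`Xᵢ` constructible. -/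
def IsConstructibleBar [Mul M] (X : Set M) : Prop :=
  ∃ (X₀ : Set M) (m : ℕ) (Xi : Fin m → Set M),
    IsConstructible X₀ ∧ (∀ i, IsConstructible (Xi i)) ∧ X = X₀ \ ⋃ i, Xi i

/-- `Xi` is a foundation family for `X`: each `Xi i ⊆ X` and every nonempty
constructible right ideal contained in `X` intersects some `Xi i`. -/
def IsFoundation [Mul M] (X : Set M) {ι : Type*} (Xi : ι → Set M) : Prop :=
  (∀ i, Xi i ⊆ X) ∧
  ∀ Y : Set M, IsConstructible Y → Y.Nonempty → Y ⊆ X → ∃ i, (Y ∩ Xi i).Nonempty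

/-- Strong C*-regularity. -/
def StronglyRegular (M : Type*) [Monoid M] : Prop :=
  ∀ (n : ℕ) (h : Fin n → M → Option M), (∀ k, InInvHull (h k)) →
  ∀ (m : ℕ) (X : Set M) (Xi : Fin m → Set M),
    IsConstructible X → (∀ i, IsConstructible (Xi i)) →
    (X \ ⋃ i, Xi i).Nonempty →
    (X \ ⋃ i, Xi i) ⊆ ⋃ k, {s | h k s = some s} →
    ∃ (l : ℕ) (Y : Fin l → Set M) (kk : Fin l → Fin n),
      (∀ j, IsConstructible (Y j)) ∧
      (X \ ⋃ i, Xi i) ⊆ ⋃ j, Y j ∧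
      ∀ j, PFixes (h (kk j)) (Y j)

/-- C*-regularity. -/
def Regular (M : Type*) [Monoid M] : Prop :=
  ∀ (n : ℕ) (h : Fin n → M → Option M), (∀ k, InInvHull (h k)) →
  ∀ X : Set M, IsConstructibleBar X → X.Nonempty →
    X ⊆ ⋃ k, {s | h k s = some s} →
    ∃ (l : ℕ) (Y : Fin l → Set M) (kk : Fin l → Fin n),
      (∀ j, IsConstructibleBar (Y j)) ∧ X ⊆ ⋃ j, Y j ∧
      ∀ j, PFixes (h (kk j)) (Y j)

/-- Strong C*-regularity on the boundary. -/
def StronglyRegularOnBoundary (M : Type*) [Monoid M] : Prop :=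
  ∀ (n : ℕ) (h : Fin n → M → Option M), (∀ k, InInvHull (h k)) →
  ∀ (m : ℕ) (X : Set M) (Xi : Fin m → Set M),
    IsConstructible X → (∀ i, IsConstructible (Xi i)) → (∀ i, Xi i ⊆ X) →
    (X \ ⋃ i, Xi i).Nonempty →
    (X \ ⋃ i, Xi i) ⊆ ⋃ k, {s | h k s = some s} →
    ∃ (l : ℕ) (Y : Fin l → Set M) (kk : Fin l → Fin n),
      (∀ j, IsConstructible (Y j)) ∧ (∀ j, PFixes (h (kk j)) (Y j)) ∧
      IsFoundation X (Sum.elim Xi Y)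

/-- C*-regularity on the boundary. -/
def RegularOnBoundary (M : Type*) [Monoid M] : Prop :=
  ∀ (n : ℕ) (h : Fin n → M → Option M), (∀ k, InInvHull (h k)) →
  ∀ (m : ℕ) (X : Set M) (Xi : Fin m → Set M),
    IsConstructible X → (∀ i, IsConstructible (Xi i)) → (∀ i, Xi i ⊆ X) →
    (X \ ⋃ i, Xi i).Nonempty →
    (X \ ⋃ i, Xi i) ⊆ ⋃ k, {s | h k s = some s} →
    ∃ (l : ℕ) (Y : Fin l → Set M) (kk : Fin l → Fin n),
      (∀ j, IsConstructibleBar (Y j)) ∧ (∀ j, PFixes (h (kk j)) (Y j)) ∧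
      IsFoundation X (Sum.elim Xi Y)

/-- The type of constructible right ideals `J(M)`. -/
def CIdeal (M : Type*) [Mul M] : Type _ := {X : Set M // IsConstructible X}

/-- The character space `{0,1}^{J(M)}` with the topology of pointwise convergence. -/
abbrev CharSpace (M : Type*) [Mul M] : Type _ := CIdeal M → Bool

/-- The principal character `χ_s`. -/
noncomputable def princhar [Mul M] (s : M) : CharSpace M :=
  fun X => decide (s ∈ X.1)

/-- `Ω(M)`: the closure of the set of principal characters. -/
noncomputable def Omega (M : Type*) [Mul M] : Set (CharSpace M) :=
  closure (Set.range (princhar : M → CharSpace M))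

/-- Filters on `J(M)`: nonempty collections of nonempty constructible ideals closed
under intersections and enlargements within `J(M)`. -/
def IsFilterOn [Mul M] (F : Set (CIdeal M)) : Prop :=
  F.Nonempty ∧ (∀ X ∈ F, (X.1 : Set M).Nonempty) ∧
  (∀ X ∈ F, ∀ Y ∈ F, ∀ Z : CIdeal M, Z.1 = X.1 ∩ Y.1 → Z ∈ F) ∧
  (∀ X ∈ F, ∀ Y : CIdeal M, X.1 ⊆ Y.1 → Y ∈ F)

/-- Nonzero multiplicative `{0,1}`-valued maps on `J(M)`. -/
def IsChar [Mul M] (χ : CharSpace M) : Prop :=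
  (∃ X, χ X = true) ∧
  ∀ X Y Z : CIdeal M, Z.1 = X.1 ∩ Y.1 → χ Z = (χ X && χ Y)

/-- Maximal characters: characters whose associated filter is maximal among filters. -/
def IsMaximalChar [Mul M] (χ : CharSpace M) : Prop :=
  IsChar χ ∧ IsFilterOn {X | χ X = true} ∧
  ∀ G : Set (CIdeal M), IsFilterOn G → {X | χ X = true} ⊆ G → G = {X | χ X = true}

/-- The set of maximal characters `Ω_max(M)`. -/
def OmegaMax (M : Type*) [Mul M] : Set (CharSpace M) := {χ | IsMaximalChar χ}

/-- The boundary `∂Ω(M)`: the closure of the set of maximal characters. -/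
noncomputable def BoundaryOmega (M : Type*) [Mul M] : Set (CharSpace M) :=
  closure (OmegaMax M)


/-! ### The monoid `R` -/

/-- Generators of the monoid `R`. -/
inductive Gen : Type
  | a : Gen
  | b : Gen
  | c : Gen
  | d : Gen
  | f : Gen
  | x : ℤ → Gen
  | y : ℤ → Gen

/-- The defining relations of the monoid `R`. -/
inductive RRel : FreeMonoid Gen → FreeMonoid Gen → Prop
  | abx (n : ℤ) : RRel (FreeMonoid.of Gen.a * FreeMonoid.of Gen.b * FreeMonoid.of (Gen.x n))
      (FreeMonoid.of Gen.b * FreeMonoid.of (Gen.x n))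
  | aby (n : ℤ) : RRel (FreeMonoid.of Gen.a * FreeMonoid.of Gen.b * FreeMonoid.of (Gen.y n))
      (FreeMonoid.of Gen.b * FreeMonoid.of (Gen.y (n + 1)))
  | cbx (n : ℤ) : RRel (FreeMonoid.of Gen.c * FreeMonoid.of Gen.b * FreeMonoid.of (Gen.x n))
      (FreeMonoid.of Gen.b * FreeMonoid.of (Gen.x (n + 1)))
  | cby (n : ℤ) : RRel (FreeMonoid.of Gen.c * FreeMonoid.of Gen.b * FreeMonoid.of (Gen.y n))
      (FreeMonoid.of Gen.b * FreeMonoid.of (Gen.y n))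
  | dbx (n : ℤ) (z : Gen) :
      RRel (FreeMonoid.of Gen.d * FreeMonoid.of Gen.b * FreeMonoid.of (Gen.x n) * FreeMonoid.of z)
        (FreeMonoid.of Gen.b * FreeMonoid.of (Gen.x n) * FreeMonoid.of z)
  | fby (n : ℤ) (z : Gen) :
      RRel (FreeMonoid.of Gen.f * FreeMonoid.of Gen.b * FreeMonoid.of (Gen.y n) * FreeMonoid.of z)
        (FreeMonoid.of Gen.b * FreeMonoid.of (Gen.y n) * FreeMonoid.of z)

/-- The monoid `R`: the quotient of the free monoid on the generators by the congruence
generated by the defining relations. -/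
def R : Type := (conGen RRel).Quotient

noncomputable instance : Monoid R := inferInstanceAs (Monoid (conGen RRel).Quotient)

/-- The quotient map from the free monoid on the generators onto `R`. -/
def qR : FreeMonoid Gen →* R := Con.mk' _

/-- The image in `R` of a generator. -/
noncomputable def gen (g : Gen) : R := qR (FreeMonoid.of g)

/-- A word contains a forbidden factor. -/
def IsForbidden (w : FreeMonoid Gen) : Prop :=
  ∃ n : ℤ,
    w = FreeMonoid.of Gen.a * FreeMonoid.of Gen.b * FreeMonoid.of (Gen.x n) ∨
    w = FreeMonoid.of Gen.a * FreeMonoid.of Gen.b * FreeMonoid.of (Gen.y n) ∨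
    w = FreeMonoid.of Gen.c * FreeMonoid.of Gen.b * FreeMonoid.of (Gen.x n) ∨
    w = FreeMonoid.of Gen.c * FreeMonoid.of Gen.b * FreeMonoid.of (Gen.y n) ∨
    w = FreeMonoid.of Gen.d * FreeMonoid.of Gen.b * FreeMonoid.of (Gen.x n) ∨
    w = FreeMonoid.of Gen.f * FreeMonoid.of Gen.b * FreeMonoid.of (Gen.y n)

/-- A word is reduced if it contains no forbidden factor. -/
def ReducedWord (u : FreeMonoid Gen) : Prop :=
  ¬ ∃ p w s : FreeMonoid Gen, IsForbidden w ∧ u = p * w * s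

/-- The prefix word `w₁ w₂ ⋯ wₙ` of an infinite word. -/
def prefixWord (w : ℕ → Gen) (n : ℕ) : FreeMonoid Gen :=
  FreeMonoid.ofList ((List.range n).map w)

/-! ### Auxiliary normalization machinery -/

/-- One-step left multiplication of a generator onto a word. -/
def mulGen : Gen → List Gen → List Gen
  | Gen.a, t =>
    match t with
    | Gen.b :: Gen.x n :: r => Gen.b :: Gen.x n :: r
    | Gen.b :: Gen.y n :: r => Gen.b :: Gen.y (n + 1) :: r
    | t => Gen.a :: t
  | Gen.c, t =>
    match t with
    | Gen.b :: Gen.x n :: r => Gen.b :: Gen.x (n + 1) :: r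
    | Gen.b :: Gen.y n :: r => Gen.b :: Gen.y n :: r
    | t => Gen.c :: t
  | Gen.d, t =>
    match t with
    | Gen.b :: Gen.x n :: z :: r => Gen.b :: Gen.x n :: z :: r
    | t => Gen.d :: t
  | Gen.f, t =>
    match t with
    | Gen.b :: Gen.y n :: z :: r => Gen.b :: Gen.y n :: z :: r
    | t => Gen.f :: t
  | g, t => g :: t

@[simp] lemma mulGen_b (t : List Gen) : mulGen Gen.b t = Gen.b :: t := rfl
@[simp] lemma mulGen_x (n : ℤ) (t : List Gen) : mulGen (Gen.x n) t = Gen.x n :: t := rfl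
@[simp] lemma mulGen_y (n : ℤ) (t : List Gen) : mulGen (Gen.y n) t = Gen.y n :: t := rfl
@[simp] lemma mulGen_nil (g : Gen) : mulGen g [] = [g] := by cases g <;> rfl
@[simp] lemma mulGen_abx (n : ℤ) (r : List Gen) :
    mulGen Gen.a (Gen.b :: Gen.x n :: r) = Gen.b :: Gen.x n :: r := rfl
@[simp] lemma mulGen_aby (n : ℤ) (r : List Gen) :
    mulGen Gen.a (Gen.b :: Gen.y n :: r) = Gen.b :: Gen.y (n + 1) :: r := rfl
@[simp] lemma mulGen_cbx (n : ℤ) (r : List Gen) :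
    mulGen Gen.c (Gen.b :: Gen.x n :: r) = Gen.b :: Gen.x (n + 1) :: r := rfl
@[simp] lemma mulGen_cby (n : ℤ) (r : List Gen) :
    mulGen Gen.c (Gen.b :: Gen.y n :: r) = Gen.b :: Gen.y n :: r := rfl
@[simp] lemma mulGen_dbx (n : ℤ) (z : Gen) (r : List Gen) :
    mulGen Gen.d (Gen.b :: Gen.x n :: z :: r) = Gen.b :: Gen.x n :: z :: r := rfl
@[simp] lemma mulGen_fby (n : ℤ) (z : Gen) (r : List Gen) :
    mulGen Gen.f (Gen.b :: Gen.y n :: z :: r) = Gen.b :: Gen.y n :: z :: r := rfl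

lemma mulGen_cons (g : Gen) (w : List Gen) : ∃ h l, mulGen g w = h :: l := by
  cases g <;> rcases w with _ | ⟨_|_|_|_|_|n1|n1, _ | ⟨_|_|_|_|_|n2|n2, _ | ⟨z, r⟩⟩⟩ <;>
    exact ⟨_, _, rfl⟩

lemma lemB (g : Gen) (s t : List Gen) :
    mulGen g (List.foldr mulGen t s) = List.foldr mulGen t (mulGen g s) := by
  cases g <;>
    rcases s with _ | ⟨_|_|_|_|_|n1|n1, _ | ⟨_|_|_|_|_|n2|n2, _ | ⟨z, r⟩⟩⟩ <;>
    try rfl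
  all_goals
    obtain ⟨h0, l0, he⟩ := mulGen_cons z (List.foldr mulGen t r)
    simp only [List.foldr_cons, mulGen_b, mulGen_x, mulGen_y, he, mulGen_dbx, mulGen_fby]

/-- Normal form of a word. -/
def norm (l : List Gen) : List Gen := List.foldr mulGen [] l

lemma foldr_norm (l t : List Gen) :
    List.foldr mulGen t l = List.foldr mulGen t (norm l) := by
  induction l with
  | nil => rfl
  | cons g l ih =>
    show mulGen g (List.foldr mulGen t l) = List.foldr mulGen t (mulGen g (norm l))
    rw [ih, lemB]

/-- Normal form of an element of the free monoid. -/
def normF (u : FreeMonoid Gen) : List Gen := norm (FreeMonoid.toList u)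

lemma normF_mul (u v : FreeMonoid Gen) :
    normF (u * v) = List.foldr mulGen (normF v) (normF u) := by
  show List.foldr mulGen [] (FreeMonoid.toList u ++ FreeMonoid.toList v) = _
  rw [List.foldr_append, foldr_norm]
  rfl

/-- The "same normal form" congruence. -/
def myCon : Con (FreeMonoid Gen) where
  r u v := normF u = normF v
  iseqv := ⟨fun _ => rfl, Eq.symm, Eq.trans⟩
  mul' h1 h2 := by
    show normF _ = normF _
    rw [normF_mul, normF_mul, h1, h2]

lemma rrel_le : ∀ x y, RRel x y → myCon x y := by
  rintro x y hr
  cases hr <;>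
    · show normF _ = normF _
      simp [normF, norm, FreeMonoid.toList_mul, FreeMonoid.toList_of]

lemma not_red_abx (n : ℤ) (r : List Gen) :
    ¬ ReducedWord (FreeMonoid.ofList (Gen.a :: Gen.b :: Gen.x n :: r)) := fun h =>
  h ⟨1, FreeMonoid.of Gen.a * FreeMonoid.of Gen.b * FreeMonoid.of (Gen.x n),
    FreeMonoid.ofList r, ⟨n, Or.inl rfl⟩, by apply FreeMonoid.toList.injective; simp⟩

lemma not_red_aby (n : ℤ) (r : List Gen) :
    ¬ ReducedWord (FreeMonoid.ofList (Gen.a :: Gen.b :: Gen.y n :: r)) := fun h =>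
  h ⟨1, FreeMonoid.of Gen.a * FreeMonoid.of Gen.b * FreeMonoid.of (Gen.y n),
    FreeMonoid.ofList r, ⟨n, Or.inr (Or.inl rfl)⟩, by apply FreeMonoid.toList.injective; simp⟩

lemma not_red_cbx (n : ℤ) (r : List Gen) :
    ¬ ReducedWord (FreeMonoid.ofList (Gen.c :: Gen.b :: Gen.x n :: r)) := fun h =>
  h ⟨1, FreeMonoid.of Gen.c * FreeMonoid.of Gen.b * FreeMonoid.of (Gen.x n),
    FreeMonoid.ofList r, ⟨n, Or.inr (Or.inr (Or.inl rfl))⟩,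
    by apply FreeMonoid.toList.injective; simp⟩

lemma not_red_cby (n : ℤ) (r : List Gen) :
    ¬ ReducedWord (FreeMonoid.ofList (Gen.c :: Gen.b :: Gen.y n :: r)) := fun h =>
  h ⟨1, FreeMonoid.of Gen.c * FreeMonoid.of Gen.b * FreeMonoid.of (Gen.y n),
    FreeMonoid.ofList r, ⟨n, Or.inr (Or.inr (Or.inr (Or.inl rfl)))⟩,
    by apply FreeMonoid.toList.injective; simp⟩

lemma not_red_dbx (n : ℤ) (r : List Gen) :
    ¬ ReducedWord (FreeMonoid.ofList (Gen.d :: Gen.b :: Gen.x n :: r)) := fun h =>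
  h ⟨1, FreeMonoid.of Gen.d * FreeMonoid.of Gen.b * FreeMonoid.of (Gen.x n),
    FreeMonoid.ofList r, ⟨n, Or.inr (Or.inr (Or.inr (Or.inr (Or.inl rfl))))⟩,
    by apply FreeMonoid.toList.injective; simp⟩

lemma not_red_fby (n : ℤ) (r : List Gen) :
    ¬ ReducedWord (FreeMonoid.ofList (Gen.f :: Gen.b :: Gen.y n :: r)) := fun h =>
  h ⟨1, FreeMonoid.of Gen.f * FreeMonoid.of Gen.b * FreeMonoid.of (Gen.y n),
    FreeMonoid.ofList r, ⟨n, Or.inr (Or.inr (Or.inr (Or.inr (Or.inr rfl))))⟩,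
    by apply FreeMonoid.toList.injective; simp⟩

lemma mulGen_of_red {g : Gen} {t : List Gen}
    (h : ReducedWord (FreeMonoid.ofList (g :: t))) : mulGen g t = g :: t := by
  cases g <;>
    rcases t with _ | ⟨_|_|_|_|_|n1|n1, _ | ⟨_|_|_|_|_|n2|n2, r⟩⟩ <;>
    first
      | rfl
      | exact absurd h (not_red_abx _ _)
      | exact absurd h (not_red_aby _ _)
      | exact absurd h (not_red_cbx _ _)
      | exact absurd h (not_red_cby _ _)
      | exact absurd h (not_red_dbx _ _)
      | exact absurd h (not_red_fby _ _)

lemma red_tail {g : Gen} {t : List Gen}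
    (h : ReducedWord (FreeMonoid.ofList (g :: t))) : ReducedWord (FreeMonoid.ofList t) := by
  rintro ⟨p, w, s, hw, hts⟩
  refine h ⟨FreeMonoid.of g * p, w, s, hw, ?_⟩
  apply FreeMonoid.toList.injective
  have ht' : t = p.toList ++ w.toList ++ s.toList := by
    have := congrArg FreeMonoid.toList hts
    simpa using this
  simp [ht']

lemma norm_of_red : ∀ l : List Gen, ReducedWord (FreeMonoid.ofList l) → norm l = l
  | [], _ => rfl
  | g :: t, h => by
    show mulGen g (norm t) = g :: t
    rw [norm_of_red t (red_tail h), mulGen_of_red h]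

/-- The quotient map onto `R` is injective on reduced words: two
reduced words representing the same element of `R` are equal. -/
theorem cstar_stmt13 (u v : FreeMonoid Gen)
    (hu : ReducedWord u) (hv : ReducedWord v) (h : qR u = qR v) : u = v := by
  have h1 : (conGen RRel) u v := by
    rw [← Con.mk'_ker (conGen RRel)]
    exact h
  have h2 : normF u = normF v := (Con.conGen_le.2 rrel_le : conGen RRel ≤ myCon) h1
  have hu' : norm (FreeMonoid.toList u) = FreeMonoid.toList u :=
    norm_of_red _ (by rwa [FreeMonoid.ofList_toList])
  have hv' : norm (FreeMonoid.toList v) = FreeMonoid.toList v :=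
    norm_of_red _ (by rwa [FreeMonoid.ofList_toList])
  apply FreeMonoid.toList.injective
  rw [← hu', ← hv']
  exact h2

end SgC
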